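/- Let p and q be two probability distributions on a finite set that coincide except possibly in coordinates i and j, with all entries of q bounded below by a constant c > 0. Then the KL divergence of the Bernoulli comparison distributions satisfies: for a single Bernoulli trial with success probability p_j/(p_i+p_j) versus q_j/(q_i+q_j), the KL divergence between the distributions of k i.i.d. such trials is at most k·(q_j(p_i − q_i)² + q_i(p_j − q_j)²)/(q_i·q_j·(p_i + p_j)). -/

import Mathlib

open scoped BigOperators

/-- KL divergence between `Bernoulli(a)` and `Bernoulli(b)`. -/
noncomputable def klBern (a b : ℝ) : ℝ :=
  a * Real.log (a / b) + (1 - a) * Real.log ((1 - a) / (1 - b))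

lemma klBern_le (a b : ℝ) (ha : 0 < a) (ha1 : a < 1) (hb : 0 < b) (hb1 : b < 1) :
    klBern a b ≤ (a - b) ^ 2 / (b * (1 - b)) := by
  have h1 : Real.log (a / b) ≤ a / b - 1 :=
    Real.log_le_sub_one_of_pos (by positivity)
  have h2 : Real.log ((1 - a) / (1 - b)) ≤ (1 - a) / (1 - b) - 1 :=
    Real.log_le_sub_one_of_pos (div_pos (by linarith) (by linarith))
  have key : a * (a / b - 1) + (1 - a) * ((1 - a) / (1 - b) - 1)
      = (a - b) ^ 2 / (b * (1 - b)) := by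
    have hbne : b ≠ 0 := ne_of_gt hb
    have h1bne : (1:ℝ) - b ≠ 0 := by linarith
    field_simp
    ring
  have := add_le_add (mul_le_mul_of_nonneg_left h1 ha.le)
    (mul_le_mul_of_nonneg_left h2 (sub_nonneg.mpr ha1.le))
  unfold klBern
  calc a * Real.log (a / b) + (1 - a) * Real.log ((1 - a) / (1 - b)) ≤ a * (a / b - 1) + (1 - a) * ((1 - a) / (1 - b) - 1) := this
    _ = (a - b) ^ 2 / (b * (1 - b)) := key

/-- Bound on the KL divergence between the laws of `k` i.i.d. pairwise-comparison
outcomes under two BTL score vectors `p` and `q` that coincide outside coordinates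
`i, j`, with the entries of `q` bounded below by `c > 0`. -/
theorem kl_pairwise_comparison_bound (n : ℕ) (p q : Fin n → ℝ)
    (hp : ∀ l, 0 < p l) (hq : ∀ l, 0 < q l)
    (hpsum : ∑ l, p l = 1) (hqsum : ∑ l, q l = 1)
    (i j : Fin n) (hij : i ≠ j)
    (hcoincide : ∀ l, l ≠ i → l ≠ j → p l = q l)
    (c : ℝ) (hc : 0 < c) (hqc : ∀ l, c ≤ q l) (k : ℕ) :
    (k : ℝ) * klBern (p j / (p i + p j)) (q j / (q i + q j)) ≤
      (k : ℝ) * (q j * (p i - q i) ^ 2 + q i * (p j - q j) ^ 2) /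
        (q i * q j * (p i + p j)) := by
  have hs : p i + p j = q i + q j := by
    have h0 : ∑ l, (p l - q l) = ∑ l ∈ ({i, j} : Finset (Fin n)), (p l - q l) := by
      refine (Finset.sum_subset (Finset.subset_univ _) ?_).symm
      intro l _ hl
      simp only [Finset.mem_insert, Finset.mem_singleton, not_or] at hl
      rw [hcoincide l hl.1 hl.2]; ring
    rw [Finset.sum_sub_distrib, hpsum, hqsum, Finset.sum_pair hij] at h0
    linarith
  have hpi := hp i; have hpj := hp j; have hqi := hq i; have hqj := hq j
  have hspos : 0 < p i + p j := by linarith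
  set a := p j / (p i + p j) with hadef
  set b := q j / (q i + q j) with hbdef
  have ha : 0 < a := by positivity
  have ha1 : a < 1 := by
    rw [hadef, div_lt_one hspos]; linarith
  have hqspos : 0 < q i + q j := by linarith
  have hb : 0 < b := by positivity
  have hb1 : b < 1 := by
    rw [hbdef, div_lt_one hqspos]; linarith
  have hkl := klBern_le a b ha ha1 hb hb1
  have heq : (a - b) ^ 2 / (b * (1 - b))
      = (q j * (p i - q i) ^ 2 + q i * (p j - q j) ^ 2) / (q i * q j * (p i + p j)) := by
    have hpij : p i = q i + q j - p j := by linarith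
    rw [hadef, hbdef, hpij]
    have hne1 : q i + q j ≠ 0 := hqspos.ne'
    have hne2 : q i ≠ 0 := hqi.ne'
    have hne3 : q j ≠ 0 := hqj.ne'
    have hne4 : q i + q j - q j ≠ 0 := by simp only [add_sub_cancel_right]; exact hqi.ne'
    have hne5 : q i + q j - p j + p j ≠ 0 := by simp only [sub_add_cancel]; exact hqspos.ne'
    field_simp
    ring
  have := mul_le_mul_of_nonneg_left hkl (Nat.cast_nonneg k : (0:ℝ) ≤ k)
  rw [heq] at this
  linarith [this, (mul_div_assoc (k:ℝ) (q j * (p i - q i) ^ 2 + q i * (p j - q j) ^ 2) (q i * q j * (p i + p j))).symm]
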